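/- Let I ⊆ R be a monomial ideal with linear quotients whose decomposition function b is regular. Let m ∈ G(I), α ⊆ set(m), and let σ be a permutation of α such that ch(m,α,σ) is degenerate. Then there exists a permutation σ′ of α such that ch(m,α,σ′) is nondegenerate and every vertex monomial of ch(m,α,σ) occurs among the vertex monomials of ch(m,α,σ′); in particular ch(m,α,σ) is a face of the simplex ch(m,α,σ′). -/

import Mathlib

open MvPolynomial

/-- The monomial ideal generated by a set of exponent vectors. -/
noncomputable def genIdeal (K : Type*) [Field K] {n : ℕ} (ms : Set (Fin n →₀ ℕ)) :
    Ideal (MvPolynomial (Fin n) K) :=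
  Ideal.span ((fun u => MvPolynomial.monomial u (1 : K)) '' ms)

/-- The colon ideal `⟨m_1, …, m_{j-1}⟩ : m_j`. -/
noncomputable def colonJ (K : Type*) [Field K] {n k : ℕ} (m : Fin k → (Fin n →₀ ℕ))
    (j : Fin k) : Ideal (MvPolynomial (Fin n) K) :=
  Submodule.colon (genIdeal K {u | ∃ i : Fin k, i < j ∧ u = m i})
    (Ideal.span {MvPolynomial.monomial (m j) (1 : K)})

/-- `I` has linear quotients w.r.t. the ordering `m_1,…,m_k` of its generators:
each colon ideal is generated by a subset of the variables. -/
def HasLinearQuotients (K : Type*) [Field K] {n k : ℕ}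
    (m : Fin k → (Fin n →₀ ℕ)) : Prop :=
  ∀ j : Fin k, ∃ S : Set (Fin n),
    colonJ K m j = Ideal.span ((fun s => (MvPolynomial.X s : MvPolynomial (Fin n) K)) '' S)

/-- `set(m_j) = {i : x_i ∈ ⟨m_1,…,m_{j-1}⟩ : m_j}`. -/
def mset (K : Type*) [Field K] {n k : ℕ} (m : Fin k → (Fin n →₀ ℕ)) (j : Fin k) :
    Set (Fin n) :=
  {t | (MvPolynomial.X t : MvPolynomial (Fin n) K) ∈ colonJ K m j}

/-- The `m i` are minimal monomial generators: none divides another. -/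
def MinimalGens {n k : ℕ} (m : Fin k → (Fin n →₀ ℕ)) : Prop :=
  ∀ i j : Fin k, m i ≤ m j → i = j

/-- `b` is the decomposition function: for a monomial `u ∈ I`, `b u` is the smallest
index `j` with `u ∈ ⟨m_1,…,m_j⟩`. -/
def IsDecompositionFunction (K : Type*) [Field K] {n k : ℕ}
    (m : Fin k → (Fin n →₀ ℕ)) (b : (Fin n →₀ ℕ) → Fin k) : Prop :=
  ∀ u : Fin n →₀ ℕ, MvPolynomial.monomial u (1 : K) ∈ genIdeal K (Set.range m) →
    (MvPolynomial.monomial u (1 : K) ∈ genIdeal K {v | ∃ i : Fin k, i ≤ b u ∧ v = m i}) ∧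
    (∀ j : Fin k,
      MvPolynomial.monomial u (1 : K) ∈ genIdeal K {v | ∃ i : Fin k, i ≤ j ∧ v = m i} →
      b u ≤ j)

/-- The decomposition function is regular: `set(b(x_t·m)) ⊆ set(m)` for every
generator `m` and every `t ∈ set(m)`. -/
def IsRegularDecomp (K : Type*) [Field K] {n k : ℕ}
    (m : Fin k → (Fin n →₀ ℕ)) (b : (Fin n →₀ ℕ) → Fin k) : Prop :=
  ∀ j : Fin k, ∀ t ∈ mset K m j,
    mset K m (b (m j + Finsupp.single t 1)) ⊆ mset K m j

/-- The sequence of vertex monomials `m_0 = m₀`, `m_{i+1} = b(x_{σ(i)} · m_i)` of the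
simplex `ch(m, α, σ)` (here `σ` is 0-indexed: `σ 0, …, σ (p-1)` is the permutation). -/
noncomputable def chainSeq {n k : ℕ} (m : Fin k → (Fin n →₀ ℕ)) (b : (Fin n →₀ ℕ) → Fin k)
    (m0 : Fin n →₀ ℕ) (σ : ℕ → Fin n) : ℕ → (Fin n →₀ ℕ)
  | 0 => m0
  | i + 1 => m (b (chainSeq m b m0 σ i + Finsupp.single (σ i) 1))

/-- `σ 0, …, σ (p-1)` is a permutation (an ordering) of the finite set `α`. -/
def PermOf {n : ℕ} (σ : ℕ → Fin n) (p : ℕ) (α : Finset (Fin n)) : Prop :=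
  Set.InjOn σ (Set.Iio p) ∧ ∀ a : Fin n, a ∈ α ↔ ∃ i < p, σ i = a

/-- `ch(m,α,σ)` is nondegenerate: the vertex monomials `m_0, …, m_p` are pairwise
distinct. -/
def Nondeg {n k : ℕ} (m : Fin k → (Fin n →₀ ℕ)) (b : (Fin n →₀ ℕ) → Fin k)
    (m0 : Fin n →₀ ℕ) (σ : ℕ → Fin n) (p : ℕ) : Prop :=
  Set.InjOn (chainSeq m b m0 σ) (Set.Iic p)

/-- A monomial (exponent vector) regarded as a point of `ℝⁿ`. -/
def toR {n : ℕ} (u : Fin n →₀ ℕ) : Fin n → ℝ := fun a => (u a : ℝ)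

/-- The set of vertex monomials of `ch(m,α,σ)`. -/
def vertSet {n k : ℕ} (m : Fin k → (Fin n →₀ ℕ)) (b : (Fin n →₀ ℕ) → Fin k)
    (m0 : Fin n →₀ ℕ) (σ : ℕ → Fin n) (p : ℕ) : Set (Fin n →₀ ℕ) :=
  {v | ∃ i ≤ p, v = chainSeq m b m0 σ i}
section Aux
open MvPolynomial

variable {K : Type*} [Field K] {n k : ℕ} {m : Fin k → (Fin n →₀ ℕ)} {b : (Fin n →₀ ℕ) → Fin k}

lemma mem_genIdeal_iff {S : Set (Fin n →₀ ℕ)} {u : Fin n →₀ ℕ} :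
    MvPolynomial.monomial u (1 : K) ∈ genIdeal K S ↔ ∃ v ∈ S, v ≤ u := by
  rw [genIdeal, MvPolynomial.mem_ideal_span_monomial_image]
  simp [MvPolynomial.support_monomial]

lemma mem_colonJ_iff {q : Fin n →₀ ℕ} {j : Fin k} :
    (MvPolynomial.monomial q (1 : K)) ∈ colonJ K m j ↔ ∃ i, i < j ∧ m i ≤ q + m j := by
  rw [colonJ, ← Ideal.submodule_span_eq, Submodule.mem_colon_span_singleton, smul_eq_mul,
    MvPolynomial.monomial_mul, mul_one, mem_genIdeal_iff]
  constructor
  · rintro ⟨v, ⟨i, hi, rfl⟩, hle⟩; exact ⟨i, hi, hle⟩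
  · rintro ⟨i, hi, hle⟩; exact ⟨m i, ⟨i, hi, rfl⟩, hle⟩

lemma X_eq_monomial (t : Fin n) : (MvPolynomial.X t : MvPolynomial (Fin n) K) =
    MvPolynomial.monomial (Finsupp.single t 1) 1 := rfl

lemma mset_iff {t : Fin n} {j : Fin k} :
    t ∈ mset K m j ↔ ∃ i, i < j ∧ m i ≤ m j + Finsupp.single t 1 := by
  rw [mset, Set.mem_setOf_eq, X_eq_monomial, mem_colonJ_iff]
  simp [add_comm]

lemma colon_var (hlq : HasLinearQuotients K m) {q : Fin n →₀ ℕ} {g : Fin k}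
    (h : ∃ i, i < g ∧ m i ≤ q + m g) : ∃ r ∈ mset K m g, 1 ≤ q r := by
  obtain ⟨S, hS⟩ := hlq g
  have hq : MvPolynomial.monomial q (1:K) ∈ colonJ K m g := mem_colonJ_iff.mpr h
  rw [hS] at hq
  have h2 : ((fun s => (MvPolynomial.X s : MvPolynomial (Fin n) K)) '' S) =
      MvPolynomial.X '' S := rfl
  rw [h2, MvPolynomial.mem_ideal_span_X_image] at hq
  obtain ⟨r, hrS, hr⟩ := hq (q) (by simp [MvPolynomial.support_monomial])
  refine ⟨r, ?_, Nat.one_le_iff_ne_zero.mpr hr⟩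
  rw [mset, Set.mem_setOf_eq, hS]
  exact Ideal.subset_span ⟨r, hrS, rfl⟩

lemma mem_genIdeal_le_iff {u : Fin n →₀ ℕ} {j : Fin k} :
    MvPolynomial.monomial u (1 : K) ∈ genIdeal K {v | ∃ i : Fin k, i ≤ j ∧ v = m i} ↔
      ∃ i, i ≤ j ∧ m i ≤ u := by
  rw [mem_genIdeal_iff]
  constructor
  · rintro ⟨v, ⟨i, hi, rfl⟩, hle⟩; exact ⟨i, hi, hle⟩
  · rintro ⟨i, hi, hle⟩; exact ⟨m i, ⟨i, hi, rfl⟩, hle⟩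

lemma mem_genIdeal_range_iff {u : Fin n →₀ ℕ} :
    MvPolynomial.monomial u (1 : K) ∈ genIdeal K (Set.range m) ↔ ∃ i, m i ≤ u := by
  rw [mem_genIdeal_iff]
  constructor
  · rintro ⟨v, ⟨i, rfl⟩, hle⟩; exact ⟨i, hle⟩
  · rintro ⟨i, hle⟩; exact ⟨m i, ⟨i, rfl⟩, hle⟩

variable (hb : IsDecompositionFunction K m b)
include hb

lemma b_le {u : Fin n →₀ ℕ} {i : Fin k} (hi : m i ≤ u) : b u ≤ i := by
  exact (hb u (mem_genIdeal_range_iff.mpr ⟨i, hi⟩)).2 i (mem_genIdeal_le_iff.mpr ⟨i, le_refl i, hi⟩)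

lemma b_div {u : Fin n →₀ ℕ} (hu : ∃ i, m i ≤ u) : m (b u) ≤ u := by
  obtain ⟨i0, hi0⟩ := hu
  obtain ⟨i, hi, hle⟩ := mem_genIdeal_le_iff.mp
    (hb u (mem_genIdeal_range_iff.mpr ⟨i0, hi0⟩)).1
  have : b u ≤ i := b_le hb hle
  have : i = b u := le_antisymm hi this
  rwa [← this]

omit hb in
lemma self_le_add_single (u : Fin n →₀ ℕ) (t : Fin n) : u ≤ u + Finsupp.single t 1 :=
  le_add_right le_rfl

/-- Shorthand for the "next generator" operation. -/
noncomputable def Beta (m : Fin k → (Fin n →₀ ℕ)) (b : (Fin n →₀ ℕ) → Fin k)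
    (a : Fin k) (t : Fin n) : Fin k := b (m a + Finsupp.single t 1)

lemma Beta_le (a : Fin k) (t : Fin n) : Beta m b a t ≤ a :=
  b_le hb (self_le_add_single (m a) t)

lemma Beta_div (a : Fin k) (t : Fin n) : m (Beta m b a t) ≤ m a + Finsupp.single t 1 :=
  b_div hb ⟨a, self_le_add_single (m a) t⟩

lemma Beta_lt {a : Fin k} {t : Fin n} (ht : t ∈ mset K m a) : Beta m b a t < a := by
  obtain ⟨i, hi, hle⟩ := mset_iff.mp ht
  exact lt_of_le_of_lt (b_le hb hle) hi

lemma Beta_stat {a : Fin k} {t : Fin n} (ht : t ∉ mset K m a) : Beta m b a t = a := by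
  rcases lt_or_eq_of_le (Beta_le hb a t) with h | h
  · exact absurd (mset_iff.mpr ⟨Beta m b a t, h, Beta_div hb a t⟩) ht
  · exact h

/-- "Lemma Z": if `r ∈ set(b u)` then `x_r` does not divide `u / b(u)`. -/
lemma not_set_dvd {u : Fin n →₀ ℕ} (hu : ∃ i, m i ≤ u) {r : Fin n}
    (hr : r ∈ mset K m (b u)) : ¬ (m (b u) + Finsupp.single r 1 ≤ u) := by
  intro hle
  obtain ⟨i, hi, hile⟩ := mset_iff.mp hr
  exact absurd (b_le hb (le_trans hile hle)) (not_le.mpr hi)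

omit hb in
lemma min_distinct (hmin : MinimalGens m) {a c : Fin k} {s t : Fin n} (hst : s ≠ t)
    (h1 : m c ≤ m a + Finsupp.single s 1) (h2 : m c ≤ m a + Finsupp.single t 1)
    (hlt : c < a) : False := by
  have hle : m c ≤ m a := by
    rw [Finsupp.le_def]
    intro x
    have h1x := (Finsupp.le_def.mp h1) x
    have h2x := (Finsupp.le_def.mp h2) x
    simp only [Finsupp.add_apply, Finsupp.single_apply] at h1x h2x
    by_cases hxs : s = x
    · subst hxs
      rw [if_neg (show ¬ t = s from fun h => hst h.symm)] at h2x
      omega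
    · simp only [if_neg hxs] at h1x; omega
  exact absurd (hmin c a hle) (ne_of_lt hlt)

lemma Beta_ne (hmin : MinimalGens m) {a : Fin k} {s t : Fin n} (hst : s ≠ t)
    (hs : s ∈ mset K m a) (_ht : t ∈ mset K m a)
    (h : Beta m b a s = Beta m b a t) : False := by
  have h1 : m (Beta m b a s) ≤ m a + Finsupp.single s 1 := Beta_div hb a s
  have h2 : m (Beta m b a s) ≤ m a + Finsupp.single t 1 := h ▸ Beta_div hb a t
  exact min_distinct hmin hst h1 h2 (Beta_lt hb hs)

lemma b_two_stat (hlq : HasLinearQuotients K m) {a : Fin k} {s t : Fin n}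
    (ht : t ∈ mset K m a) (hs : s ∉ mset K m (Beta m b a t)) :
    b (m a + Finsupp.single t 1 + Finsupp.single s 1) = Beta m b a t := by
  set a1 := Beta m b a t with ha1
  set w := m a + Finsupp.single t 1 + Finsupp.single s 1 with hwdef
  have h1 : m a1 ≤ m a + Finsupp.single t 1 := Beta_div hb a t
  have hmaw : m a ≤ w := le_trans (self_le_add_single _ t) (self_le_add_single _ s)
  have hle : b w ≤ a1 := b_le hb (le_trans h1 (self_le_add_single _ s))
  rcases lt_or_eq_of_le hle with hlt | heq
  · exfalso
    obtain ⟨z1, hz1⟩ := exists_add_of_le h1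
    have hweq : (z1 + Finsupp.single s 1) + m a1 = w := by
      rw [hwdef, hz1]; abel
    obtain ⟨r, hr, hr1⟩ := colon_var hlq ⟨b w, hlt, by rw [hweq]; exact b_div hb ⟨a, hmaw⟩⟩
    rw [Finsupp.add_apply] at hr1
    by_cases hz : 1 ≤ z1 r
    · refine not_set_dvd hb (u := m a + Finsupp.single t 1)
        ⟨a, self_le_add_single _ t⟩ hr ?_
      have hh : m a1 + Finsupp.single r 1 ≤ m a + Finsupp.single t 1 := by
        rw [hz1]; exact add_le_add_right (Finsupp.single_le_iff.mpr hz) _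
      exact hh
    · have hrs : r = s := by
        by_contra hrs
        rw [Finsupp.single_apply, if_neg (fun h => hrs h.symm)] at hr1
        omega
      exact hs (hrs ▸ hr)
  · exact heq

lemma b_two_prod (hlq : HasLinearQuotients K m) (hreg : IsRegularDecomp K m b)
    {a : Fin k} {s t : Fin n}
    (ht : t ∈ mset K m a) (hs : s ∈ mset K m (Beta m b a t)) :
    b (m a + Finsupp.single t 1 + Finsupp.single s 1) = Beta m b (Beta m b a t) s := by
  set a1 := Beta m b a t with ha1
  set c1 := Beta m b a1 s with hc1def
  set w := m a + Finsupp.single t 1 + Finsupp.single s 1 with hwdef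
  have h1 : m a1 ≤ m a + Finsupp.single t 1 := Beta_div hb a t
  have hc1 : m c1 ≤ m a1 + Finsupp.single s 1 := Beta_div hb a1 s
  have hmaw : m a ≤ w := le_trans (self_le_add_single _ t) (self_le_add_single _ s)
  have hle : b w ≤ c1 := b_le hb (le_trans hc1 (add_le_add_left h1 _))
  rcases lt_or_eq_of_le hle with hlt | heq
  · exfalso
    obtain ⟨z1, hz1⟩ := exists_add_of_le h1
    obtain ⟨y1, hy1⟩ := exists_add_of_le hc1
    have hweq : (y1 + z1) + m c1 = w := by
      calc (y1 + z1) + m c1 = (m c1 + y1) + z1 := by abel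
      _ = (m a1 + Finsupp.single s 1) + z1 := by rw [← hy1]
      _ = (m a1 + z1) + Finsupp.single s 1 := by abel
      _ = w := by rw [← hz1]
    obtain ⟨r, hr, hr1⟩ := colon_var hlq ⟨b w, hlt, by rw [hweq]; exact b_div hb ⟨a, hmaw⟩⟩
    rw [Finsupp.add_apply] at hr1
    by_cases hy : 1 ≤ y1 r
    · refine not_set_dvd hb (u := m a1 + Finsupp.single s 1)
        ⟨a1, self_le_add_single _ s⟩ hr ?_
      have hh : m c1 + Finsupp.single r 1 ≤ m a1 + Finsupp.single s 1 := by
        rw [hy1]; exact add_le_add_right (Finsupp.single_le_iff.mpr hy) _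
      exact hh
    · have hz : 1 ≤ z1 r := by omega
      have hra1 : r ∈ mset K m a1 := hreg a1 s hs hr
      refine not_set_dvd hb (u := m a + Finsupp.single t 1)
        ⟨a, self_le_add_single _ t⟩ hra1 ?_
      have hh : m a1 + Finsupp.single r 1 ≤ m a + Finsupp.single t 1 := by
        rw [hz1]; exact add_le_add_right (Finsupp.single_le_iff.mpr hz) _
      exact hh
  · exact heq

lemma exchange (hmin : MinimalGens m) (hlq : HasLinearQuotients K m)
    (hreg : IsRegularDecomp K m b) {a : Fin k} {s t : Fin n} (hst : s ≠ t)
    (hs : s ∈ mset K m a) (ht : t ∈ mset K m a) (hns : s ∉ mset K m (Beta m b a t)) :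
    t ∈ mset K m (Beta m b a s) ∧ Beta m b (Beta m b a s) t = Beta m b a t := by
  have hcomm : m a + Finsupp.single t 1 + Finsupp.single s 1
      = m a + Finsupp.single s 1 + Finsupp.single t 1 := by abel
  have hw1 : b (m a + Finsupp.single s 1 + Finsupp.single t 1) = Beta m b a t := by
    rw [← hcomm]; exact b_two_stat hb hlq ht hns
  have ht2 : t ∈ mset K m (Beta m b a s) := by
    by_contra hnt
    have hw2 : b (m a + Finsupp.single s 1 + Finsupp.single t 1) = Beta m b a s :=
      b_two_stat hb hlq hs hnt
    exact Beta_ne hb hmin hst hs ht (hw2 ▸ hw1)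
  have hw2 : b (m a + Finsupp.single s 1 + Finsupp.single t 1)
      = Beta m b (Beta m b a s) t := b_two_prod hb hlq hreg hs ht2
  exact ⟨ht2, by rw [← hw2, hw1]⟩

/-- The chain of generator indices. -/
noncomputable def idxChain (m : Fin k → (Fin n →₀ ℕ)) (b : (Fin n →₀ ℕ) → Fin k)
    (j : Fin k) (σ : ℕ → Fin n) : ℕ → Fin k
  | 0 => j
  | i + 1 => Beta m b (idxChain m b j σ i) (σ i)

omit hb in
lemma idxChain_zero {j : Fin k} {σ : ℕ → Fin n} : idxChain m b j σ 0 = j := rfl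

omit hb in
lemma idxChain_succ {j : Fin k} {σ : ℕ → Fin n} (i : ℕ) :
    idxChain m b j σ (i + 1) = Beta m b (idxChain m b j σ i) (σ i) := rfl

omit hb in
lemma chainSeq_eq_idx {j : Fin k} {σ : ℕ → Fin n} (i : ℕ) :
    chainSeq m b (m j) σ i = m (idxChain m b j σ i) := by
  induction i with
  | zero => rfl
  | succ i ih => rw [chainSeq, ih]; rfl

omit hb in
lemma idxChain_congr {j : Fin k} {σ τ : ℕ → Fin n} {i : ℕ}
    (h : ∀ r < i, σ r = τ r) : idxChain m b j σ i = idxChain m b j τ i := by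
  induction i with
  | zero => rfl
  | succ i ih =>
      rw [idxChain_succ, idxChain_succ, ih (fun r hr => h r (Nat.lt_succ_of_lt hr)),
        h i (Nat.lt_succ_self i)]

omit hb in
lemma permOf_comp {p : ℕ} {α : Finset (Fin n)} {σ : ℕ → Fin n} (hperm : PermOf σ p α)
    (π ρ : ℕ → ℕ) (hπ : ∀ r < p, π r < p) (hρ : ∀ r < p, ρ r < p)
    (hlr : ∀ r < p, ρ (π r) = r) (hrl : ∀ r < p, π (ρ r) = r) :
    PermOf (fun r => σ (π r)) p α := by
  constructor
  · intro x hx y hy hxy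
    have hx' : x < p := hx
    have hy' : y < p := hy
    have : π x = π y := hperm.1 (Set.mem_Iio.mpr (hπ x hx')) (Set.mem_Iio.mpr (hπ y hy')) hxy
    calc x = ρ (π x) := (hlr x hx').symm
    _ = ρ (π y) := by rw [this]
    _ = y := hlr y hy'
  · intro a
    rw [hperm.2 a]
    constructor
    · rintro ⟨i, hi, rfl⟩
      exact ⟨ρ i, hρ i hi, by simp only []; rw [hrl i hi]⟩
    · rintro ⟨i, hi, rfl⟩
      exact ⟨π i, hπ i hi, rfl⟩

open scoped Classical in
lemma surgery (hmin : MinimalGens m) (hlq : HasLinearQuotients K m)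
    (hreg : IsRegularDecomp K m b) {j : Fin k} {p : ℕ} {α : Finset (Fin n)}
    (hα : ↑α ⊆ mset K m j) :
    ∀ (N : ℕ) (σ : ℕ → Fin n), PermOf σ p α →
    ((Finset.range p).filter
      (fun i => σ i ∉ mset K m (idxChain m b j σ i))).card ≤ N →
    ∃ σ' : ℕ → Fin n, PermOf σ' p α ∧
      (∀ i < p, σ' i ∈ mset K m (idxChain m b j σ' i)) ∧
      (∀ r ≤ p, ∃ r' ≤ p, idxChain m b j σ' r' = idxChain m b j σ r) := by
  intro N
  induction N with
  | zero =>
      intro σ hperm hcard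
      refine ⟨σ, hperm, ?_, fun r hr => ⟨r, hr, rfl⟩⟩
      intro i hi
      by_contra hstat
      have hmem : i ∈ (Finset.range p).filter
          (fun i => σ i ∉ mset K m (idxChain m b j σ i)) := by
        simp only [Finset.mem_filter, Finset.mem_range]
        exact ⟨hi, hstat⟩
      have := Finset.card_pos.mpr ⟨i, hmem⟩
      omega
  | succ N IH =>
      intro σ hperm hcard
      by_cases hall : ∀ i < p, σ i ∈ mset K m (idxChain m b j σ i)
      · exact ⟨σ, hperm, hall, fun r hr => ⟨r, hr, rfl⟩⟩
      push_neg at hall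
      have hex : ∃ i, i < p ∧ σ i ∉ mset K m (idxChain m b j σ i) := hall
      set A : (ℕ → Fin n) → ℕ → Fin k := idxChain m b j with hA
      -- least stationary index i
      set i := Nat.find hex with hidef
      have hi : i < p ∧ σ i ∉ mset K m (A σ i) := Nat.find_spec hex
      have hprod : ∀ r < i, σ r ∈ mset K m (A σ r) := by
        intro r hr
        have := Nat.find_min hex hr
        push_neg at this
        exact this (lt_trans hr hi.1)
      have hαi : σ i ∈ (α : Set (Fin n)) := by
        rw [Finset.mem_coe, hperm.2 (σ i)]; exact ⟨i, hi.1, rfl⟩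
      have h0 : σ i ∈ mset K m (A σ 0) := hα hαi
      have hipos : 0 < i := by
        rcases Nat.eq_zero_or_pos i with h | h
        · exact absurd (h ▸ h0) (h ▸ hi.2)
        · exact h
      -- largest L < i with σ i ∈ mset (A σ L)
      set L := Nat.findGreatest (fun l => σ i ∈ mset K m (A σ l)) (i - 1) with hLdef
      have hLQ : σ i ∈ mset K m (A σ L) :=
        Nat.findGreatest_spec (P := fun l => σ i ∈ mset K m (A σ l)) (Nat.zero_le _) h0
      have hLle : L ≤ i - 1 := Nat.findGreatest_le _
      have hLlt : L < i := by omega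
      have hnadj : σ i ∉ mset K m (A σ (L + 1)) := by
        by_cases hL1 : L + 1 ≤ i - 1
        · exact Nat.findGreatest_is_greatest (Nat.lt_succ_self L) hL1
        · have hLi : L + 1 = i := by omega
          rw [hLi]
          exact hi.2
      have hst : σ i ≠ σ L := by
        intro h
        have := hperm.1 (Set.mem_Iio.mpr hi.1) (Set.mem_Iio.mpr (lt_trans hLlt hi.1)) h
        omega
      have hs : σ i ∈ mset K m (A σ L) := hLQ
      have ht : σ L ∈ mset K m (A σ L) := hprod L hLlt
      have hnadj' : σ i ∉ mset K m (Beta m b (A σ L) (σ L)) := hnadj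
      obtain ⟨hEX1, hEX2⟩ := exchange hb hmin hlq hreg hst hs ht hnadj'
      -- the new ordering
      set σ' : ℕ → Fin n := fun r =>
        σ (if r < L then r else if r = L then i else if r ≤ i then r - 1 else r) with hσ'
      have hσ'1 : ∀ r, r < L → σ' r = σ r := by
        intro r h; simp only [hσ']; congr 1; split_ifs <;> omega
      have hσ'2 : σ' L = σ i := by
        simp only [hσ']; congr 1; split_ifs <;> omega
      have hσ'3 : ∀ r, L < r → r ≤ i → σ' r = σ (r - 1) := by
        intro r h1 h2; simp only [hσ']; congr 1; split_ifs <;> omega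
      have hσ'4 : ∀ r, i < r → σ' r = σ r := by
        intro r h; simp only [hσ']; congr 1; split_ifs <;> omega
      -- σ' is a permutation of α
      have hperm' : PermOf σ' p α := by
        exact permOf_comp hperm
          (fun r => if r < L then r else if r = L then i else if r ≤ i then r - 1 else r)
          (fun y => if y < L then y else if y = i then L else if y < i then y + 1 else y)
          (by intro r hr; split_ifs <;> omega)
          (by intro r hr; split_ifs <;> omega)
          (by intro r hr; split_ifs <;> omega)
          (by intro r hr; split_ifs <;> omega)
      -- chain equalities
      have c1 : ∀ r, r ≤ L → A σ' r = A σ r := by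
        intro r hr
        exact idxChain_congr (fun r' hr' => hσ'1 r' (by omega))
      have cL1 : A σ' (L + 1) = Beta m b (A σ L) (σ i) := by
        have e1 : A σ' (L + 1) = Beta m b (A σ' L) (σ' L) := idxChain_succ _
        rw [e1, c1 L le_rfl, hσ'2]
      have c2 : ∀ r, L + 1 ≤ r → r ≤ i → A σ' (r + 1) = A σ r := by
        intro r hr
        induction r, hr using Nat.le_induction with
        | base =>
            intro hle
            have e1 : A σ' (L + 1 + 1) = Beta m b (A σ' (L + 1)) (σ' (L + 1)) :=
              idxChain_succ _
            rw [e1, cL1, hσ'3 (L + 1) (Nat.lt_succ_self L) hle]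
            simp only [Nat.add_sub_cancel]
            rw [hEX2]
            exact (idxChain_succ _).symm
        | succ r hr ih =>
            intro hle
            have e1 : A σ' (r + 1 + 1) = Beta m b (A σ' (r + 1)) (σ' (r + 1)) :=
              idxChain_succ _
            rw [e1, ih (by omega), hσ'3 (r + 1) (by omega) hle]
            simp only [Nat.add_sub_cancel]
            exact (idxChain_succ _).symm
      have cstat : A σ (i + 1) = A σ i := by
        have e1 : A σ (i + 1) = Beta m b (A σ i) (σ i) := idxChain_succ _
        rw [e1]
        exact Beta_stat hb hi.2
      have c3 : ∀ r, i + 1 ≤ r → A σ' r = A σ r := by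
        intro r hr
        induction r, hr using Nat.le_induction with
        | base => rw [c2 i (by omega) le_rfl, cstat]
        | succ r hr ih =>
            have e1 : A σ' (r + 1) = Beta m b (A σ' r) (σ' r) := idxChain_succ _
            have e2 : A σ (r + 1) = Beta m b (A σ r) (σ r) := idxChain_succ _
            rw [e1, e2, ih, hσ'4 r (by omega)]
      -- vertex set inclusion
      have hvert : ∀ r ≤ p, ∃ r' ≤ p, A σ' r' = A σ r := by
        intro r hr
        rcases le_or_gt r L with h | h
        · exact ⟨r, hr, c1 r h⟩
        · rcases le_or_gt r i with h2 | h2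
          · exact ⟨r + 1, by omega, c2 r (by omega) h2⟩
          · exact ⟨r, hr, c3 r (by omega)⟩
      -- new stationary set is strictly smaller
      have hsubset : (Finset.range p).filter
            (fun r => σ' r ∉ mset K m (A σ' r)) ⊆
          ((Finset.range p).filter
            (fun r => σ r ∉ mset K m (A σ r))).erase i := by
        intro r hrmem
        simp only [Finset.mem_filter, Finset.mem_range] at hrmem
        obtain ⟨hrp, hrstat⟩ := hrmem
        rcases lt_or_ge r L with h | h
        · exfalso; apply hrstat
          rw [hσ'1 r h, c1 r (le_of_lt h)]
          exact hprod r (by omega)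
        rcases eq_or_lt_of_le h with h | h
        · exfalso; apply hrstat
          have hrL : r = L := h.symm
          subst hrL
          rw [hσ'2, c1 L le_rfl]
          exact hs
        rcases eq_or_lt_of_le (Nat.succ_le_of_lt h) with h2 | h2
        · exfalso; apply hrstat
          have hrL : r = L + 1 := by omega
          subst hrL
          rw [hσ'3 (L + 1) (Nat.lt_succ_self L) (by omega), cL1]
          simp only [Nat.add_sub_cancel]
          exact hEX1
        rcases le_or_gt r i with h3 | h3
        · exfalso; apply hrstat
          rw [hσ'3 r (by omega) h3]
          have hc : A σ' r = A σ (r - 1) := by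
            have hc' := c2 (r - 1) (by omega) (by omega)
            have hr1 : r - 1 + 1 = r := by omega
            rwa [hr1] at hc'
          rw [hc]
          exact hprod (r - 1) (by omega)
        · simp only [Finset.mem_erase, Finset.mem_filter, Finset.mem_range]
          refine ⟨by omega, hrp, ?_⟩
          rwa [hσ'4 r h3, c3 r (by omega)] at hrstat
      have hcard' : ((Finset.range p).filter
          (fun r => σ' r ∉ mset K m (A σ' r))).card ≤ N := by
        have himem : i ∈ (Finset.range p).filter
            (fun r => σ r ∉ mset K m (A σ r)) := by
          simp only [Finset.mem_filter, Finset.mem_range]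
          exact ⟨hi.1, hi.2⟩
        have h1 := Finset.card_le_card hsubset
        rw [Finset.card_erase_of_mem himem] at h1
        have h2 := Finset.card_pos.mpr ⟨i, himem⟩
        omega
      obtain ⟨σ'', hperm'', hall'', hvert''⟩ := IH σ' hperm' hcard'
      refine ⟨σ'', hperm'', hall'', ?_⟩
      intro r hr
      obtain ⟨r', hr', heq'⟩ := hvert r hr
      obtain ⟨r'', hr'', heq''⟩ := hvert'' r' hr'
      exact ⟨r'', hr'', by rw [heq'', heq']⟩

lemma chain_strictAnti {j : Fin k} {p : ℕ} {σ' : ℕ → Fin n}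
    (hall : ∀ i < p, σ' i ∈ mset K m (idxChain m b j σ' i)) :
    ∀ r r' : ℕ, r < r' → r' ≤ p → idxChain m b j σ' r' < idxChain m b j σ' r := by
  intro r r' hlt
  induction r', hlt using Nat.le_induction with
  | base =>
      intro hle
      exact Beta_lt hb (hall r (by omega))
  | succ r' hr' ih =>
      intro hle
      have h1 : idxChain m b j σ' (r' + 1) < idxChain m b j σ' r' :=
        Beta_lt hb (hall r' (by omega))
      exact lt_trans h1 (ih (by omega))

end Aux

/-- if `ch(m,α,σ)` is degenerate then there is a permutation `σ'` of `α`
with `ch(m,α,σ')` nondegenerate such that every vertex monomial of `ch(m,α,σ)` occurs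
among the vertex monomials of `ch(m,α,σ')`; in particular `ch(m,α,σ)` is a face of the
simplex `ch(m,α,σ')`. -/

theorem stmt1 (K : Type*) [Field K] {n k : ℕ} (m : Fin k → (Fin n →₀ ℕ))
    (hmin : MinimalGens m) (hlq : HasLinearQuotients K m)
    (b : (Fin n →₀ ℕ) → Fin k) (hb : IsDecompositionFunction K m b)
    (hreg : IsRegularDecomp K m b)
    (j : Fin k) (α : Finset (Fin n)) (hα : ↑α ⊆ mset K m j)
    (p : ℕ) (hcard : α.card = p)
    (σ : ℕ → Fin n) (hσ : PermOf σ p α)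
    (hdeg : ¬ Nondeg m b (m j) σ p) :
    ∃ σ' : ℕ → Fin n, PermOf σ' p α ∧ Nondeg m b (m j) σ' p ∧
      vertSet m b (m j) σ p ⊆ vertSet m b (m j) σ' p ∧
      convexHull ℝ (toR '' vertSet m b (m j) σ p) ⊆
        convexHull ℝ (toR '' vertSet m b (m j) σ' p) := by
  classical
  obtain ⟨σ', hperm', hall', hvert'⟩ := surgery hb hmin hlq hreg hα
    ((Finset.range p).filter
      (fun i => σ i ∉ mset K m (idxChain m b j σ i))).card σ hσ le_rfl
  have hnd : Nondeg m b (m j) σ' p := by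
    intro x hx y hy hxy
    rw [Set.mem_Iic] at hx hy
    rw [chainSeq_eq_idx, chainSeq_eq_idx] at hxy
    have hxy' : idxChain m b j σ' x = idxChain m b j σ' y :=
      hmin _ _ (le_of_eq hxy)
    rcases lt_trichotomy x y with h | h | h
    · exact absurd hxy' (ne_of_gt (chain_strictAnti hb hall' x y h hy))
    · exact h
    · exact absurd hxy'.symm (ne_of_gt (chain_strictAnti hb hall' y x h hx))
  have hsub : vertSet m b (m j) σ p ⊆ vertSet m b (m j) σ' p := by
    rintro v ⟨r, hr, rfl⟩
    obtain ⟨r', hr', heq⟩ := hvert' r hr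
    exact ⟨r', hr', by rw [chainSeq_eq_idx, chainSeq_eq_idx, heq]⟩
  exact ⟨σ', hperm', hnd, hsub, convexHull_mono (Set.image_mono hsub)⟩
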